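/- In a lexicographically sorted array of equal-length binary strings, for any three ordered strings K ≤ K1 ≤ K2, dist_e(K2,K) ≥ dist_e(K1,K). -/

import Mathlib

/-- value of a binary string read as a binary numeral (most significant bit first) -/
def decimal (K : List Bool) : ℕ :=
  K.foldl (fun acc b => 2 * acc + cond b 1 0) 0

/-- length of the longest common prefix of two strings -/
def lcpLen : List Bool → List Bool → ℕ
  | a :: as, b :: bs => if a = b then lcpLen as bs + 1 else 0
  | _, _ => 0

/-- non-prefix length `KL` of two hashkeys -/
def KL (K1 K2 : List Bool) : ℕ := K1.length - lcpLen K1 K2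

/-- extended element distance `KD_e` -/
def KDe (B : ℕ) (K1 K2 : List Bool) : ℕ :=
  Nat.dist (decimal ((K1.drop (lcpLen K1 K2)).take B))
           (decimal ((K2.drop (lcpLen K1 K2)).take B))

/-- extended hashkey distance `dist_e = KL + KD_e / 2^B` -/
noncomputable def distE (B : ℕ) (K1 K2 : List Bool) : ℝ :=
  (KL K1 K2 : ℝ) + (KDe B K1 K2 : ℝ) / 2 ^ B

lemma decimal_foldl (l : List Bool) (a : ℕ) :
    l.foldl (fun acc b => 2 * acc + cond b 1 0) a = a * 2 ^ l.length + decimal l := by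
  induction l generalizing a with
  | nil => simp [decimal]
  | cons x xs ih =>
    simp only [List.foldl_cons, List.length_cons, decimal] at *
    rw [ih, ih (2 * 0 + cond x 1 0)]
    ring

lemma decimal_cons (x : Bool) (xs : List Bool) :
    decimal (x :: xs) = cond x 1 0 * 2 ^ xs.length + decimal xs := by
  show xs.foldl _ (2 * 0 + cond x 1 0) = _
  rw [decimal_foldl]; ring_nf

lemma decimal_append (l1 l2 : List Bool) :
    decimal (l1 ++ l2) = decimal l1 * 2 ^ l2.length + decimal l2 := by
  unfold decimal
  rw [List.foldl_append, decimal_foldl]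
  rfl

lemma decimal_lt (l : List Bool) : decimal l < 2 ^ l.length := by
  induction l with
  | nil => simp [decimal]
  | cons x xs ih =>
    rw [decimal_cons]
    have : cond x 1 0 ≤ 1 := by cases x <;> simp
    have h2 : (2:ℕ) ^ (x :: xs).length = 2 ^ xs.length + 2 ^ xs.length := by
      simp [List.length_cons, pow_succ]; ring
    rw [h2]
    have : cond x 1 0 * 2 ^ xs.length ≤ 2 ^ xs.length := by
      calc cond x 1 0 * 2 ^ xs.length ≤ 1 * 2 ^ xs.length := by
            exact Nat.mul_le_mul_right _ this
        _ = 2 ^ xs.length := one_mul _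
    omega

lemma dec_lt_of_lex : ∀ {a b : List Bool}, a.length = b.length →
    List.Lex (· < ·) a b → decimal a < decimal b := by
  intro a b hlen h
  induction h with
  | nil => simp at hlen
  | @cons x as bs h ih =>
    have hl : as.length = bs.length := by simpa using hlen
    rw [decimal_cons, decimal_cons, hl]
    exact Nat.add_lt_add_left (ih hl) _
  | @rel x as y bs hxy =>
    have hl : as.length = bs.length := by simpa using hlen
    have hx : x = false := by revert hxy; cases x <;> cases y <;> decide
    have hy : y = true := by revert hxy; cases x <;> cases y <;> decide
    subst hx hy
    rw [decimal_cons, decimal_cons, hl]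
    have := decimal_lt as
    simp only [cond, one_mul, zero_mul, zero_add]
    have := decimal_lt as
    rw [hl] at this
    omega

lemma dec_le_of_le {a b : List Bool} (hlen : a.length = b.length) (h : a ≤ b) :
    decimal a ≤ decimal b := by
  rcases lt_or_eq_of_le h with h | rfl
  · exact (dec_lt_of_lex hlen h).le
  · exact le_rfl

lemma lcpLen_le_left : ∀ a b : List Bool, lcpLen a b ≤ a.length := by
  intro a
  induction a with
  | nil => intro b; cases b <;> simp [lcpLen]
  | cons x xs ih =>
    intro b
    cases b with
    | nil => simp [lcpLen]
    | cons y ys =>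
      by_cases hxy : x = y <;> simp [lcpLen, hxy]
      exact ih ys

lemma take_lcp : ∀ a b : List Bool, a.take (lcpLen a b) = b.take (lcpLen a b) := by
  intro a
  induction a with
  | nil => intro b; cases b <;> simp [lcpLen]
  | cons x xs ih =>
    intro b
    cases b with
    | nil => simp [lcpLen]
    | cons y ys =>
      by_cases hxy : x = y
      · subst hxy; simp [lcpLen, ih ys]
      · simp [lcpLen, hxy]

lemma lcp_drop_ne : ∀ (a b : List Bool) {x y : Bool} {xs ys : List Bool},
    a.drop (lcpLen a b) = x :: xs → b.drop (lcpLen a b) = y :: ys → x ≠ y := by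
  intro a
  induction a with
  | nil => intro b x y xs ys ha; simp at ha
  | cons p as ih =>
    intro b x y xs ys ha hb
    cases b with
    | nil => simp [lcpLen] at hb
    | cons q bs =>
      by_cases hpq : p = q
      · subst hpq
        simp only [lcpLen, if_pos rfl, List.drop_succ_cons] at ha hb
        exact ih bs ha hb
      · simp only [lcpLen, if_neg hpq, List.drop_zero] at ha hb
        cases ha; cases hb; exact hpq

/-- From equal prefixes and decimal order, decimal order of the suffixes. -/
lemma dec_drop_le {a b : List Bool} (n : ℕ) (hlen : a.length = b.length)
    (ht : a.take n = b.take n) (hd : decimal a ≤ decimal b) :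
    decimal (a.drop n) ≤ decimal (b.drop n) := by
  have ha := (List.take_append_drop n a).symm
  have hb := (List.take_append_drop n b).symm
  have hda : a.length - n = (a.drop n).length := (List.length_drop ..).symm
  have hdb : b.length - n = (b.drop n).length := (List.length_drop ..).symm
  have hdl : (a.drop n).length = (b.drop n).length := by
    rw [List.length_drop, List.length_drop, hlen]
  rw [ha, hb, decimal_append, decimal_append, ht, hdl] at hd
  omega

/-- Decimal order transfers to truncations (for equal-length lists). -/
lemma dec_take_le {a b : List Bool} (B : ℕ) (hlen : a.length = b.length)
    (hd : decimal a ≤ decimal b) :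
    decimal (a.take B) ≤ decimal (b.take B) := by
  rcases le_or_gt a.length B with hB | hB
  · rw [List.take_of_length_le hB, List.take_of_length_le (hlen ▸ hB)]
    exact hd
  · have ha := (List.take_append_drop B a).symm
    have hb := (List.take_append_drop B b).symm
    have hdl : (a.drop B).length = (b.drop B).length := by
      rw [List.length_drop, List.length_drop, hlen]
    rw [ha, decimal_append] at hd
    conv_rhs at hd => rw [hb, decimal_append]
    rw [hdl] at hd
    set k := (b.drop B).length
    have h1 : decimal (a.drop B) < 2 ^ k := hdl ▸ decimal_lt _
    have h2 : decimal (b.drop B) < 2 ^ k := decimal_lt _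
    by_contra hcon
    push_neg at hcon
    have : (decimal (b.take B) + 1) * 2 ^ k ≤ decimal (a.take B) * 2 ^ k :=
      Nat.mul_le_mul_right _ hcon
    nlinarith [h1, h2, hd, this]

lemma head_false_true {x y : Bool} {xs ys : List Bool} (hlen : xs.length = ys.length)
    (hxy : x ≠ y) (hd : decimal (x :: xs) ≤ decimal (y :: ys)) : x = false ∧ y = true := by
  cases x <;> cases y
  · exact absurd rfl hxy
  · exact ⟨rfl, rfl⟩
  · exfalso
    rw [decimal_cons, decimal_cons] at hd
    have h1 := decimal_lt ys
    simp only [cond] at hd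
    rw [hlen] at hd
    omega
  · exact absurd rfl hxy

lemma KDe_lt (B : ℕ) (K1 K2 : List Bool) : KDe B K1 K2 < 2 ^ B := by
  unfold KDe
  have hB : 0 < 2 ^ B := Nat.pow_pos (by norm_num)
  have h1 : decimal ((K1.drop (lcpLen K1 K2)).take B) < 2 ^ B := by
    calc decimal ((K1.drop (lcpLen K1 K2)).take B)
        < 2 ^ ((K1.drop (lcpLen K1 K2)).take B).length := decimal_lt _
      _ ≤ 2 ^ B := Nat.pow_le_pow_right (by norm_num) (by simp)
  have h2 : decimal ((K2.drop (lcpLen K1 K2)).take B) < 2 ^ B := by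
    calc decimal ((K2.drop (lcpLen K1 K2)).take B)
        < 2 ^ ((K2.drop (lcpLen K1 K2)).take B).length := decimal_lt _
      _ ≤ 2 ^ B := Nat.pow_le_pow_right (by norm_num) (by simp)
  simp only [Nat.dist]
  omega

theorem stmt_8 (m B : ℕ) (hB : 1 ≤ B) (K K1 K2 : List Bool)
    (h : K.length = m) (h1 : K1.length = m) (h2 : K2.length = m)
    (hK1 : K ≤ K1) (h12 : K1 ≤ K2) :
    distE B K1 K ≤ distE B K2 K := by
  set L1 := lcpLen K1 K with hL1
  set L2 := lcpLen K2 K with hL2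
  have hL1m : L1 ≤ m := h1 ▸ lcpLen_le_left K1 K
  have hL2m : L2 ≤ m := h2 ▸ lcpLen_le_left K2 K
  have hdK1 : decimal K ≤ decimal K1 := dec_le_of_le (h ▸ h1.symm) hK1
  have hd12 : decimal K1 ≤ decimal K2 := dec_le_of_le (h1 ▸ h2.symm) h12
  have ht1 : K1.take L1 = K.take L1 := take_lcp K1 K
  have ht2 : K2.take L2 = K.take L2 := take_lcp K2 K
  -- first : L2 ≤ L1
  have hle : L2 ≤ L1 := by
    by_contra hcon
    push_neg at hcon  -- L1 < L2
    have hL1lt : L1 < m := lt_of_lt_of_le hcon hL2m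
    -- K, K1, K2 agree on first L1 chars
    have htk2 : K2.take L1 = K.take L1 := by
      have := congrArg (List.take L1) ht2
      rw [List.take_take, List.take_take] at this
      simpa [min_eq_left hcon.le] using this
    -- drops at L1 as cons
    have hKd : K.drop L1 = K[L1] :: K.drop (L1+1) :=
      List.drop_eq_getElem_cons (by omega)
    have hK1d : K1.drop L1 = K1[L1] :: K1.drop (L1+1) :=
      List.drop_eq_getElem_cons (by omega)
    have hK2d : K2.drop L1 = K2[L1] :: K2.drop (L1+1) :=
      List.drop_eq_getElem_cons (by omega)
    have hne : K1[L1] ≠ K[L1] := lcp_drop_ne K1 K hK1d hKd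
    -- K2[L1] = K[L1]
    have hgetK2 : K2[L1] = K[L1] := by
      have e1 : (K2.take L2)[L1]'(by simp; omega) = K2[L1] := List.getElem_take ..
      have e2 : (K.take L2)[L1]'(by simp; omega) = K[L1] := List.getElem_take ..
      rw [← e1, ← e2]
      congr 1
    -- decimal comparisons of drops
    have hd1 : decimal (K.drop L1) ≤ decimal (K1.drop L1) :=
      dec_drop_le L1 (by rw [h, h1]) ht1.symm hdK1
    have hd2 : decimal (K1.drop L1) ≤ decimal (K2.drop L1) :=
      dec_drop_le L1 (by rw [h1, h2]) (by rw [ht1, htk2]) hd12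
    have hlen1 : (K.drop (L1+1)).length = (K1.drop (L1+1)).length := by
      simp [h, h1]
    have hlen2 : (K1.drop (L1+1)).length = (K2.drop (L1+1)).length := by
      simp [h1, h2]
    rw [hKd, hK1d] at hd1
    rw [hK1d, hK2d] at hd2
    obtain ⟨hKf, hK1t⟩ := head_false_true hlen1 (Ne.symm hne) hd1
    rw [hK1t, hgetK2, hKf] at hd2
    obtain ⟨hcontra, -⟩ := head_false_true hlen2 (by decide) hd2
    simp at hcontra
  -- main split
  rcases eq_or_lt_of_le hle with heq | hlt
  · -- L2 = L1 : same KL, compare KDe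
    have hKL : KL K1 K = KL K2 K := by
      unfold KL
      rw [← hL1, ← hL2, h1, h2, heq]
    have htk12 : K1.take L1 = K2.take L1 := by rw [ht1, ← heq, ht2]
    have hdrop1 : decimal (K.drop L1) ≤ decimal (K1.drop L1) :=
      dec_drop_le L1 (by rw [h, h1]) ht1.symm hdK1
    have hdrop2 : decimal (K1.drop L1) ≤ decimal (K2.drop L1) :=
      dec_drop_le L1 (by rw [h1, h2]) htk12 hd12
    have htake1 : decimal ((K.drop L1).take B) ≤ decimal ((K1.drop L1).take B) :=
      dec_take_le B (by simp [h, h1]) hdrop1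
    have htake2 : decimal ((K1.drop L1).take B) ≤ decimal ((K2.drop L1).take B) :=
      dec_take_le B (by simp [h1, h2]) hdrop2
    have hKDe : KDe B K1 K ≤ KDe B K2 K := by
      unfold KDe
      rw [← hL1, ← hL2, heq]
      simp only [Nat.dist]
      omega
    unfold distE
    rw [hKL]
    have hpow : (0:ℝ) < 2 ^ B := by positivity
    have hKDe' : (KDe B K1 K : ℝ) ≤ (KDe B K2 K : ℝ) := by exact_mod_cast hKDe
    have : (KDe B K1 K : ℝ) / 2 ^ B ≤ (KDe B K2 K : ℝ) / 2 ^ B :=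
      div_le_div_of_nonneg_right hKDe' hpow.le
    linarith
  · -- L2 < L1 : KL strictly larger on the right
    have hKL : KL K1 K + 1 ≤ KL K2 K := by
      unfold KL
      rw [← hL1, ← hL2, h1, h2]
      omega
    unfold distE
    have hpow : (0:ℝ) < 2 ^ B := by positivity
    have hK1small : (KDe B K1 K : ℝ) / 2 ^ B < 1 := by
      rw [div_lt_one hpow]
      exact_mod_cast (by exact_mod_cast KDe_lt B K1 K : (KDe B K1 K : ℝ) < (2:ℝ) ^ B)
    have hK2nonneg : (0:ℝ) ≤ (KDe B K2 K : ℝ) / 2 ^ B := by positivity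
    have hcast : (KL K1 K : ℝ) + 1 ≤ (KL K2 K : ℝ) := by exact_mod_cast hKL
    linarith
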